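/- With the 18-generator 𝔽₂-vector space V and the linear map d of the left-handed trefoil complex (d{x₁,w̌₂} = {y̌₁,ŷ₂}+{ŷ₁,y̌₂}; d{x₁,ŵ₂} = {ŷ₁,ŷ₂}+{y̌₂,z₁}+{y̌₁,z₂}; d{x₂,w̌₁} = {y̌₁,ŷ₂}+{ŷ₁,y̌₂}; d{x₂,ŵ₁} = {ŷ₁,ŷ₂}+{y̌₁,z₂}+{y̌₂,z₁}; d{y̌₁,z₂} = {w̌₁,ŵ₂}+{ŵ₁,w̌₂}; d{ŷ₁,z₂} = {ŵ₁,ŵ₂}; d{y̌₂,z₁} = {w̌₁,ŵ₂}+{ŵ₁,w̌₂}; d{ŷ₂,z₁} = {ŵ₁,ŵ₂}; d{w̌₁,ŵ₂} = {z₁,z₂}; d{ŵ₁,w̌₂} = {z₁,z₂}; d{y̌₁,ŷ₂} = {w̌₁,w̌₂}; d{ŷ₁,y̌₂} = {w̌₁,w̌₂}; d = 0 otherwise), the cohomology ker(d)/im(d) has dimension 6 over 𝔽₂, with basis represented by the classes {x₁,x₂}, {x₁,w̌₂}+{x₂,w̌₁}, {y̌₁,y̌₂}, {x₁,ŵ₂}+{x₂,ŵ₁},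 {y̌₁,z₂}+{y̌₂,z₁}, {ŷ₁,z₂}+{ŷ₂,z₁}. -/

import Mathlib

/-!  The cochain complex (with `ħ = 1`, coefficients `𝔽₂`) of the left-handed trefoil.
Basis indexing of the 18 generators:
0 = {x₁,x₂}, 1 = {x₁,w̌₂}, 2 = {x₁,ŵ₂}, 3 = {x₂,w̌₁}, 4 = {x₂,ŵ₁},
5 = {y̌₁,ŷ₂}, 6 = {ŷ₁,y̌₂}, 7 = {y̌₁,y̌₂}, 8 = {ŷ₁,ŷ₂},
9 = {y̌₁,z₂}, 10 = {ŷ₁,z₂}, 11 = {y̌₂,z₁}, 12 = {ŷ₂,z₁},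
13 = {w̌₁,ŵ₂}, 14 = {ŵ₁,w̌₂}, 15 = {w̌₁,w̌₂}, 16 = {ŵ₁,ŵ₂}, 17 = {z₁,z₂}.  -/

/-- The underlying `𝔽₂`-vector space with 18 basis vectors. -/
abbrev TrefoilV : Type := Fin 18 → ZMod 2

/-- The `i`-th basis vector. -/
def trefoilGen (i : Fin 18) : TrefoilV := Pi.single i 1

/-- The differential of the left-handed trefoil complex:
`d{x₁,w̌₂} = {y̌₁,ŷ₂}+{ŷ₁,y̌₂}`; `d{x₁,ŵ₂} = {ŷ₁,ŷ₂}+{y̌₂,z₁}+{y̌₁,z₂}`;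
`d{x₂,w̌₁} = {y̌₁,ŷ₂}+{ŷ₁,y̌₂}`; `d{x₂,ŵ₁} = {ŷ₁,ŷ₂}+{y̌₁,z₂}+{y̌₂,z₁}`;
`d{y̌₁,z₂} = {w̌₁,ŵ₂}+{ŵ₁,w̌₂}`; `d{ŷ₁,z₂} = {ŵ₁,ŵ₂}`;
`d{y̌₂,z₁} = {w̌₁,ŵ₂}+{ŵ₁,w̌₂}`; `d{ŷ₂,z₁} = {ŵ₁,ŵ₂}`;
`d{w̌₁,ŵ₂} = {z₁,z₂}`; `d{ŵ₁,w̌₂} = {z₁,z₂}`;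
`d{y̌₁,ŷ₂} = {w̌₁,w̌₂}`; `d{ŷ₁,y̌₂} = {w̌₁,w̌₂}`; `d = 0` otherwise. -/
noncomputable def trefoilLeftD : TrefoilV →ₗ[ZMod 2] TrefoilV :=
  Matrix.toLin' (Matrix.of fun i j : Fin 18 =>
    if ((i : ℕ), (j : ℕ)) ∈
      [(5, 1), (6, 1), (8, 2), (11, 2), (9, 2), (5, 3), (6, 3), (8, 4), (9, 4), (11, 4),
       (13, 9), (14, 9), (16, 10), (13, 11), (14, 11), (16, 12), (17, 13), (17, 14),
       (15, 5), (15, 6)] then 1 else 0)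

/-- The cohomology `ker d / im d` of the left-handed trefoil complex. -/
noncomputable abbrev trefoilLeftCohomology :=
  LinearMap.ker trefoilLeftD ⧸
    Submodule.comap (LinearMap.ker trefoilLeftD).subtype (LinearMap.range trefoilLeftD)

open Matrix

-- auxiliary
def Dm : Matrix (Fin 18) (Fin 18) (ZMod 2) :=
  Matrix.of fun i j : Fin 18 =>
    if ((i : ℕ), (j : ℕ)) ∈
      [(5, 1), (6, 1), (8, 2), (11, 2), (9, 2), (5, 3), (6, 3), (8, 4), (9, 4), (11, 4),
       (13, 9), (14, 9), (16, 10), (13, 11), (14, 11), (16, 12), (17, 13), (17, 14),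
       (15, 5), (15, 6)] then 1 else 0
def Pm : Matrix (Fin 6) (Fin 18) (ZMod 2) :=
  Matrix.of fun i j => if ((i:ℕ),(j:ℕ)) ∈ [(0,0),(1,1),(2,7),(3,2),(4,8),(4,9),(5,10)] then 1 else 0
def Vm : Matrix (Fin 18) (Fin 6) (ZMod 2) :=
  Matrix.of fun i j => if ((i:ℕ),(j:ℕ)) ∈ [(0,0),(1,1),(3,1),(7,2),(2,3),(4,3),(9,4),(11,4),(10,5),(12,5)] then 1 else 0
def Gm : Matrix (Fin 18) (Fin 18) (ZMod 2) :=
  Matrix.of fun i j => if ((i:ℕ),(j:ℕ)) ∈ [(1,5),(2,8),(9,13),(5,15),(10,16),(13,17)] then 1 else 0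
def Hm : Matrix (Fin 18) (Fin 18) (ZMod 2) :=
  Matrix.of fun i j => if ((i:ℕ),(j:ℕ)) ∈ [(3,5),(4,8),(11,13),(6,15),(12,16),(14,17)] then 1 else 0

lemma hdef : trefoilLeftD = Matrix.toLin' Dm := rfl

lemma hdapp (z : TrefoilV) : trefoilLeftD z = Dm *ᵥ z := Matrix.toLin'_apply Dm z

set_option maxRecDepth 100000 in
lemma hPD : Pm * Dm = 0 := by decide
set_option maxRecDepth 100000 in
lemma hPV : Pm * Vm = 1 := by decide
set_option maxRecDepth 100000 in
lemma hHom : (1 : Matrix (Fin 18) (Fin 18) (ZMod 2)) + Vm * Pm = Dm * Gm + Hm * Dm := by decide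

def vv : Fin 6 → TrefoilV :=
  ![trefoilGen 0, trefoilGen 1 + trefoilGen 3, trefoilGen 7,
    trefoilGen 2 + trefoilGen 4, trefoilGen 9 + trefoilGen 11,
    trefoilGen 10 + trefoilGen 12]

lemma hmem' : ∀ i : Fin 6, vv i ∈ LinearMap.ker trefoilLeftD := by
  intro i
  rw [LinearMap.mem_ker, hdef, Matrix.toLin'_apply]
  fin_cases i <;> decide

lemma hvV : ∀ (i : Fin 6) (j : Fin 18), vv i j = Vm j i := by decide

lemma hVy (y : Fin 6 → ZMod 2) : ∑ i, y i • vv i = Vm *ᵥ y := by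
  funext j
  rw [Finset.sum_apply]
  simp only [Pi.smul_apply, smul_eq_mul, Matrix.mulVec, dotProduct, hvV]
  exact Finset.sum_congr rfl fun i _ => mul_comm _ _

noncomputable abbrev Kk := LinearMap.ker trefoilLeftD
noncomputable abbrev Rr := Submodule.comap Kk.subtype (LinearMap.range trefoilLeftD)

noncomputable def cvec (i : Fin 6) : trefoilLeftCohomology :=
  Submodule.Quotient.mk ⟨vv i, hmem' i⟩

lemma hneg (a : TrefoilV) : -a = a := funext fun _ => CharTwo.neg_eq _

lemma hsub (g : Fin 6 → ZMod 2) :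
    Kk.subtype (∑ i, g i • (⟨vv i, hmem' i⟩ : Kk)) = ∑ i, g i • vv i := by
  rw [map_sum]; simp

lemma hmkq (g : Fin 6 → ZMod 2) :
    Rr.mkQ (∑ i, g i • (⟨vv i, hmem' i⟩ : Kk)) = ∑ i, g i • cvec i := by
  rw [map_sum]
  exact Finset.sum_congr rfl fun i _ => by rw [_root_.map_smul]; rfl

lemma hind : LinearIndependent (ZMod 2) cvec := by
  rw [Fintype.linearIndependent_iff]
  intro g hg i
  have h0 : Rr.mkQ (∑ i, g i • (⟨vv i, hmem' i⟩ : Kk)) = 0 := by rw [hmkq]; exact hg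
  have hs : (∑ i, g i • (⟨vv i, hmem' i⟩ : Kk)) ∈ Rr :=
    (Submodule.Quotient.mk_eq_zero Rr).mp h0
  obtain ⟨y, hy⟩ := LinearMap.mem_range.mp (Submodule.mem_comap.mp hs)
  have hy' : Dm *ᵥ y = Vm *ᵥ g := by
    rw [← hVy, ← hsub g, ← hy, hdef, Matrix.toLin'_apply]
  have : (0 : Fin 6 → ZMod 2) = g := by
    calc (0 : Fin 6 → ZMod 2) = (Pm * Dm) *ᵥ y := by rw [hPD, Matrix.zero_mulVec]
      _ = Pm *ᵥ (Dm *ᵥ y) := by rw [← Matrix.mulVec_mulVec]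
      _ = Pm *ᵥ (Vm *ᵥ g) := by rw [hy']
      _ = (Pm * Vm) *ᵥ g := by rw [Matrix.mulVec_mulVec]
      _ = g := by rw [hPV, Matrix.one_mulVec]
  rw [← this]; rfl

set_option maxHeartbeats 1000000 in
lemma hspan : ⊤ ≤ Submodule.span (ZMod 2) (Set.range cvec) := by
  intro q _
  obtain ⟨s, rfl⟩ := Submodule.Quotient.mk_surjective Rr q
  obtain ⟨x, hx⟩ := s
  have hDx : Dm *ᵥ x = 0 :=
    (Matrix.toLin'_apply Dm x).symm.trans (LinearMap.mem_ker.mp hx)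
  have key : x + Vm *ᵥ (Pm *ᵥ x) = Dm *ᵥ (Gm *ᵥ x) :=
    calc x + Vm *ᵥ (Pm *ᵥ x)
        = (1 + Vm * Pm) *ᵥ x := by
          rw [Matrix.add_mulVec, Matrix.one_mulVec, Matrix.mulVec_mulVec]
      _ = (Dm * Gm + Hm * Dm) *ᵥ x := by rw [hHom]
      _ = Dm *ᵥ (Gm *ᵥ x) + Hm *ᵥ (Dm *ᵥ x) := by
          rw [Matrix.add_mulVec, Matrix.mulVec_mulVec, Matrix.mulVec_mulVec]
      _ = Dm *ᵥ (Gm *ᵥ x) := by rw [hDx, Matrix.mulVec_zero, add_zero]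
  have hqe : (Submodule.Quotient.mk ⟨x, hx⟩ : trefoilLeftCohomology)
      = ∑ i, (Pm *ᵥ x) i • cvec i := by
    rw [← hmkq, Submodule.mkQ_apply, Submodule.Quotient.eq]
    refine Submodule.mem_comap.mpr (LinearMap.mem_range.mpr ⟨Gm *ᵥ x, ?_⟩)
    rw [hdapp, ← key, _root_.map_sub, hsub (Pm *ᵥ x), hVy]
    show x + Vm *ᵥ (Pm *ᵥ x) = x - Vm *ᵥ (Pm *ᵥ x)
    rw [sub_eq_add_neg, hneg]
  rw [hqe]
  exact Submodule.sum_mem _ fun i _ =>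
    Submodule.smul_mem _ _ (Submodule.subset_span ⟨i, rfl⟩)

noncomputable def trefoilBasis : Module.Basis (Fin 6) (ZMod 2) trefoilLeftCohomology :=
  Module.Basis.mk hind hspan

/-- The cohomology of the left-handed trefoil complex has dimension 6 over `𝔽₂`,
with basis represented by `{x₁,x₂}`, `{x₁,w̌₂}+{x₂,w̌₁}`, `{y̌₁,y̌₂}`,
`{x₁,ŵ₂}+{x₂,ŵ₁}`, `{y̌₁,z₂}+{y̌₂,z₁}`, `{ŷ₁,z₂}+{ŷ₂,z₁}`. -/
theorem trefoil_left_cohomology :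
    Module.finrank (ZMod 2) trefoilLeftCohomology = 6 ∧
    ∃ (hmem : ∀ i : Fin 6,
        (![trefoilGen 0, trefoilGen 1 + trefoilGen 3, trefoilGen 7,
           trefoilGen 2 + trefoilGen 4, trefoilGen 9 + trefoilGen 11,
           trefoilGen 10 + trefoilGen 12] i) ∈ LinearMap.ker trefoilLeftD)
      (b : Module.Basis (Fin 6) (ZMod 2) trefoilLeftCohomology),
      ∀ i : Fin 6, b i = Submodule.Quotient.mk
        ⟨![trefoilGen 0, trefoilGen 1 + trefoilGen 3, trefoilGen 7,
           trefoilGen 2 + trefoilGen 4, trefoilGen 9 + trefoilGen 11,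
           trefoilGen 10 + trefoilGen 12] i, hmem i⟩ := by
  refine ⟨?_, hmem', trefoilBasis, fun i => ?_⟩
  · rw [Module.finrank_eq_card_basis trefoilBasis, Fintype.card_fin]
  · exact Module.Basis.mk_apply hind hspan i
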